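/- Let K be a spherically symmetric kernel on ℝ^d satisfying (K0)–(K2), i.e. K(z) = κ(‖z‖) for some κ : [0,∞) → [0,∞). Let Z be a random vector with Lebesgue density K, R := ‖Z‖, and set b := E(R⁴) / (E(R⁶) − E(R⁴)²/d) and a := 1 + b·E(R⁴)/d. Then for every j ∈ {1,…,d} and every multi-index γ ∈ ℕ₀^d with |γ| ≤ 3, ∫ K(z) (a z_j − b ‖z‖² z_j) z^γ dz = 1 if γ = e_j, and = 0 otherwise. -/

import Mathlib

open MeasureTheory Filter Topology

noncomputable section

/-- `ℝ^d` as a pi type; `volume` is `d`-dimensional Lebesgue measure. -/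
abbrev Vec (d : ℕ) := Fin d → ℝ

/-- The Euclidean norm on `ℝ^d`. -/
def euclNorm {d : ℕ} (z : Vec d) : ℝ := Real.sqrt (∑ i, z i ^ 2)

namespace Stmt3

variable {d : ℕ}

lemma euclNorm_nonneg (z : Vec d) : 0 ≤ euclNorm z := Real.sqrt_nonneg _

lemma euclNorm_sq (z : Vec d) : euclNorm z ^ 2 = ∑ i, z i ^ 2 :=
  Real.sq_sqrt (Finset.sum_nonneg fun i _ => sq_nonneg _)

lemma abs_coord_le (z : Vec d) (i : Fin d) : |z i| ≤ euclNorm z := by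
  rw [← Real.sqrt_sq_eq_abs]
  exact Real.sqrt_le_sqrt (Finset.single_le_sum (fun k _ => sq_nonneg (z k)) (Finset.mem_univ i))

lemma norm_eq_euclNorm (x : EuclideanSpace ℝ (Fin d)) : ‖x‖ = euclNorm x := by
  rw [EuclideanSpace.norm_eq, euclNorm]
  congr 1
  exact Finset.sum_congr rfl fun i _ => by rw [Real.norm_eq_abs, sq_abs]

lemma integral_euclidean_eq (f : Vec d → ℝ) :
    (∫ x : EuclideanSpace ℝ (Fin d), f x) = ∫ z : Vec d, f z :=
  (EuclideanSpace.volume_preserving_symm_measurableEquiv_toLp (Fin d)).integral_comp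
    (MeasurableEquiv.toLp 2 (Fin d → ℝ)).symm.measurableEmbedding f

lemma integral_comp_T (T : Vec d → Vec d)
    (hadd : ∀ x y : Vec d, T (x + y) = T x + T y)
    (hsmul : ∀ (c : ℝ) (x : Vec d), T (c • x) = c • T x)
    (hinv : Function.Involutive T)
    (hnorm : ∀ z, euclNorm (T z) = euclNorm z)
    (f : Vec d → ℝ) : (∫ z : Vec d, f (T z)) = ∫ z : Vec d, f z := by
  set E := EuclideanSpace ℝ (Fin d)
  let L0 : E →ₗ[ℝ] E :=
    { toFun := (fun x => WithLp.toLp 2 (T (WithLp.ofLp x)))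
      map_add' := (fun x y => by
        show WithLp.toLp 2 (T (WithLp.ofLp x + WithLp.ofLp y)) = _
        rw [hadd]; rfl)
      map_smul' := (fun c x => by
        show WithLp.toLp 2 (T (c • WithLp.ofLp x)) = _
        rw [hsmul]; rfl) }
  let L : E ≃ₗᵢ[ℝ] E :=
    { toLinearEquiv := LinearEquiv.ofInvolutive L0 (fun x => by
        show WithLp.toLp 2 (T (WithLp.ofLp (WithLp.toLp 2 (T (WithLp.ofLp x))))) = x
        rw [WithLp.ofLp_toLp, hinv, WithLp.toLp_ofLp])
      norm_map' := fun x => by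
        rw [norm_eq_euclNorm, norm_eq_euclNorm]
        exact hnorm x }
  have h2 : (∫ x : E, f (T x)) = ∫ x : E, f x :=
    L.measurePreserving.integral_comp L.toHomeomorph.measurableEmbedding (fun x : E => f x)
  rw [← integral_euclidean_eq (fun z => f (T z)), h2, integral_euclidean_eq]


/-- sum over univ splitting two distinct indices -/
lemma sum_pair_congr {i j : Fin d} (hij : i ≠ j) (f g : Fin d → ℝ)
    (h : ∀ k, k ≠ i → k ≠ j → f k = g k) (hpair : f i + f j = g i + g j) :
    ∑ k, f k = ∑ k, g k := by
  have hi : i ∈ Finset.univ := Finset.mem_univ i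
  have hj : j ∈ Finset.univ.erase i := Finset.mem_erase.2 ⟨hij.symm, Finset.mem_univ j⟩
  rw [← Finset.add_sum_erase _ f hi, ← Finset.add_sum_erase _ f hj,
      ← Finset.add_sum_erase _ g hi, ← Finset.add_sum_erase _ g hj]
  have : ∑ k ∈ (Finset.univ.erase i).erase j, f k = ∑ k ∈ (Finset.univ.erase i).erase j, g k := by
    refine Finset.sum_congr rfl fun k hk => ?_
    have hkj := (Finset.mem_erase.1 hk).1
    have hki := (Finset.mem_erase.1 (Finset.mem_erase.1 hk).2).1
    exact h k hki hkj
  rw [this]; ring_nf; linarith [hpair]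

def flipT (i : Fin d) (z : Vec d) : Vec d := fun k => if k = i then -z k else z k
def swapT (i j : Fin d) (z : Vec d) : Vec d := fun k => z (Equiv.swap i j k)
def rotT (i j : Fin d) (z : Vec d) : Vec d :=
  fun k => if k = i then (z i + z j) / Real.sqrt 2
    else if k = j then (z i - z j) / Real.sqrt 2 else z k

lemma sqrt2_pos : (0:ℝ) < Real.sqrt 2 := Real.sqrt_pos.2 (by norm_num)
lemma sqrt2_sq : Real.sqrt 2 ^ 2 = 2 := Real.sq_sqrt (by norm_num)

lemma integral_comp_flip (i : Fin d) (f : Vec d → ℝ) :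
    (∫ z : Vec d, f (flipT i z)) = ∫ z : Vec d, f z := by
  refine integral_comp_T _ ?_ ?_ ?_ ?_ f
  · intro x y; funext k; simp only [flipT, Pi.add_apply]; split_ifs <;> ring
  · intro c x; funext k; simp only [flipT, Pi.smul_apply, smul_eq_mul]; split_ifs <;> ring
  · intro z; funext k; simp only [flipT]; split_ifs <;> ring
  · intro z; unfold euclNorm; congr 1
    refine Finset.sum_congr rfl fun k _ => ?_
    simp only [flipT]; split_ifs <;> ring

lemma integral_comp_swap (i j : Fin d) (f : Vec d → ℝ) :
    (∫ z : Vec d, f (swapT i j z)) = ∫ z : Vec d, f z := by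
  refine integral_comp_T _ ?_ ?_ ?_ ?_ f
  · intro x y; funext k; simp [swapT]
  · intro c x; funext k; simp [swapT]
  · intro z; funext k; simp [swapT, Equiv.swap_apply_self]
  · intro z; unfold euclNorm; congr 1
    exact Equiv.sum_comp (Equiv.swap i j) (fun k => z k ^ 2)

lemma swapT_apply_left (i j : Fin d) (z : Vec d) : swapT i j z i = z j := by
  simp [swapT]
lemma swapT_apply_right (i j : Fin d) (z : Vec d) : swapT i j z j = z i := by
  simp [swapT]
lemma swapT_apply_other {i j k : Fin d} (hki : k ≠ i) (hkj : k ≠ j) (z : Vec d) :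
    swapT i j z k = z k := by simp [swapT, Equiv.swap_apply_of_ne_of_ne hki hkj]
lemma flipT_apply_self (i : Fin d) (z : Vec d) : flipT i z i = -z i := by simp [flipT]
lemma flipT_apply_other {i k : Fin d} (hki : k ≠ i) (z : Vec d) : flipT i z k = z k := by
  simp [flipT, hki]
lemma rotT_apply_left {i j : Fin d} (hij : i ≠ j) (z : Vec d) :
    rotT i j z i = (z i + z j) / Real.sqrt 2 := by simp [rotT]
lemma rotT_apply_right {i j : Fin d} (hij : i ≠ j) (z : Vec d) :
    rotT i j z j = (z i - z j) / Real.sqrt 2 := by simp [rotT, hij.symm]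
lemma rotT_apply_other {i j k : Fin d} (hki : k ≠ i) (hkj : k ≠ j) (z : Vec d) :
    rotT i j z k = z k := by simp [rotT, hki, hkj]

lemma rotT_norm {i j : Fin d} (hij : i ≠ j) (z : Vec d) :
    euclNorm (rotT i j z) = euclNorm z := by
  unfold euclNorm; congr 1
  refine sum_pair_congr hij _ _ (fun k hki hkj => by rw [rotT_apply_other hki hkj]) ?_
  rw [rotT_apply_left hij, rotT_apply_right hij]
  have h2 := sqrt2_sq
  have h0 : Real.sqrt 2 ≠ 0 := ne_of_gt sqrt2_pos
  field_simp
  rw [h2]; ring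

lemma integral_comp_rot {i j : Fin d} (hij : i ≠ j) (f : Vec d → ℝ) :
    (∫ z : Vec d, f (rotT i j z)) = ∫ z : Vec d, f z := by
  have h0 : Real.sqrt 2 ≠ 0 := ne_of_gt sqrt2_pos
  have h2 := sqrt2_sq
  refine integral_comp_T _ ?_ ?_ ?_ (rotT_norm hij) f
  · intro x y; funext k; simp only [rotT, Pi.add_apply]; split_ifs <;> ring
  · intro c x; funext k; simp only [rotT, Pi.smul_apply, smul_eq_mul]; split_ifs <;> ring
  · intro z; funext k
    by_cases hki : k = i
    · subst hki
      rw [rotT_apply_left hij, rotT_apply_left hij, rotT_apply_right hij]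
      field_simp
      rw [h2]; ring
    · by_cases hkj : k = j
      · subst hkj
        rw [rotT_apply_right hij, rotT_apply_left hij, rotT_apply_right hij]
        field_simp
        rw [h2]; ring
      · rw [rotT_apply_other hki hkj, rotT_apply_other hki hkj]


lemma flipT_norm (i : Fin d) (z : Vec d) : euclNorm (flipT i z) = euclNorm z := by
  unfold euclNorm; congr 1
  refine Finset.sum_congr rfl fun k _ => ?_
  simp only [flipT]; split_ifs <;> ring

lemma swapT_norm (i j : Fin d) (z : Vec d) : euclNorm (swapT i j z) = euclNorm z := by
  unfold euclNorm; congr 1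
  exact Equiv.sum_comp (Equiv.swap i j) (fun k => z k ^ 2)

lemma int_congr {f g : Vec d → ℝ} (h : ∀ z, f z = g z) : (∫ z : Vec d, f z) = ∫ z : Vec d, g z := by
  congr 1; exact funext h

lemma continuous_euclNorm : Continuous (euclNorm (d := d)) := by
  unfold euclNorm
  exact Real.continuous_sqrt.comp (continuous_finset_sum _ fun i _ => (continuous_apply i).pow 2)

section Kernel

variable (K : Vec d → ℝ)

/-- the canonical integrand family -/
def F (e p q : ℕ) (j k : Fin d) (z : Vec d) : ℝ :=
  K z * (euclNorm z ^ e * (z j ^ p * z k ^ q))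

variable (hKmeas : Measurable K) (hKpos : ∀ z, 0 ≤ K z)
  (hKmom : ∀ r : ℝ, 0 < r → Integrable (fun z => K z * euclNorm z ^ r))
  (hK0 : (∫ z : Vec d, K z) = 1)
  (hκ : ∀ T : Vec d → Vec d, (∀ z, euclNorm (T z) = euclNorm z) → ∀ z, K (T z) = K z)

include hKmom in
lemma hKn (n : ℕ) (hn : 0 < n) : Integrable (fun z : Vec d => K z * euclNorm z ^ n) := by
  have := hKmom n (by exact_mod_cast hn)
  simpa [Real.rpow_natCast] using this

include hKmeas hKpos hKmom hK0 in
lemma integrable_F (e p q : ℕ) (j k : Fin d) (h : e + p + q ≤ 6) :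
    Integrable (F K e p q j k) := by
  have hKint : Integrable K := integrable_of_integral_eq_one hK0
  have h6 := hKn K hKmom 6 (by norm_num)
  refine Integrable.mono' (hKint.add h6) ?_ ?_
  · refine (hKmeas.mul ?_).aestronglyMeasurable
    exact ((continuous_euclNorm.pow e).mul
      (((continuous_apply j).pow p).mul ((continuous_apply k).pow q))).measurable
  · refine Filter.Eventually.of_forall fun z => ?_
    have hN : 0 ≤ euclNorm z := euclNorm_nonneg z
    have h1 : |euclNorm z ^ e * (z j ^ p * z k ^ q)| ≤ euclNorm z ^ (e + p + q) := by
      rw [abs_mul, abs_mul, abs_pow, abs_pow, abs_pow, abs_of_nonneg hN, pow_add, pow_add,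
        mul_assoc]
      have hpj : |z j| ^ p ≤ euclNorm z ^ p := pow_le_pow_left₀ (abs_nonneg _) (abs_coord_le z j) p
      have hqk : |z k| ^ q ≤ euclNorm z ^ q := pow_le_pow_left₀ (abs_nonneg _) (abs_coord_le z k) q
      exact mul_le_mul_of_nonneg_left
        (mul_le_mul hpj hqk (pow_nonneg (abs_nonneg _) q) (pow_nonneg hN p)) (pow_nonneg hN e)
    have h2 : euclNorm z ^ (e + p + q) ≤ 1 + euclNorm z ^ 6 := by
      rcases le_total (euclNorm z) 1 with hN1 | hN1
      · have := pow_le_one₀ hN hN1 (n := e + p + q)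
        have h6 : (0:ℝ) ≤ euclNorm z ^ 6 := pow_nonneg hN 6
        linarith
      · have := pow_le_pow_right₀ hN1 h
        linarith
    have : |F K e p q j k z| ≤ K z * (1 + euclNorm z ^ 6) := by
      rw [F, abs_mul, abs_of_nonneg (hKpos z)]
      exact mul_le_mul_of_nonneg_left (le_trans h1 h2) (hKpos z)
    simpa [mul_add] using this

include hκ in
lemma vanish (e p q : ℕ) {j k : Fin d} (hjk : j ≠ k) (hq : Odd q) :
    (∫ z : Vec d, F K e p q j k z) = 0 := by
  have h := integral_comp_flip k (F K e p q j k)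
  have heq : ∀ z, F K e p q j k (flipT k z) = - F K e p q j k z := by
    intro z; unfold F
    rw [hκ _ (flipT_norm k) z, flipT_norm, flipT_apply_other hjk, flipT_apply_self,
      Odd.neg_pow hq]
    ring
  rw [int_congr heq, integral_neg] at h
  linarith

include hκ in
lemma swap_single (e p : ℕ) (i i' : Fin d) :
    (∫ z : Vec d, F K e p 0 i i z) = ∫ z : Vec d, F K e p 0 i' i' z := by
  have h := integral_comp_swap i i' (F K e p 0 i i)
  have heq : ∀ z, F K e p 0 i i (swapT i i' z) = F K e p 0 i' i' z := by
    intro z; unfold F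
    rw [hκ _ (swapT_norm i i') z, swapT_norm, swapT_apply_left]
  rw [int_congr heq] at h
  exact h.symm

include hκ in
lemma swap_pair (e p q : ℕ) {i i' j : Fin d} (hij : i ≠ j) (hi'j : i' ≠ j) :
    (∫ z : Vec d, F K e p q i j z) = ∫ z : Vec d, F K e p q i' j z := by
  have h := integral_comp_swap i i' (F K e p q i j)
  have heq : ∀ z, F K e p q i j (swapT i i' z) = F K e p q i' j z := by
    intro z; unfold F
    rw [hκ _ (swapT_norm i i') z, swapT_norm, swapT_apply_left,
      swapT_apply_other hij.symm hi'j.symm]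
  rw [int_congr heq] at h
  exact h.symm


include hKmeas hKpos hKmom hK0 hκ in
lemma rot4 (e : ℕ) (he : e ≤ 2) {j k : Fin d} (hjk : j ≠ k) :
    (∫ z : Vec d, F K e 4 0 j j z) = 3 * ∫ z : Vec d, F K e 2 2 j k z := by
  have h := integral_comp_rot hjk (F K e 4 0 j j)
  have key : ∀ z : Vec d, F K e 4 0 j j (rotT j k z) =
      (1/4) * F K e 4 0 j j z + F K e 3 1 j k z + (3/2) * F K e 2 2 j k z
      + F K e 1 3 j k z + (1/4) * F K e 4 0 k k z := by
    intro z; unfold F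
    rw [hκ _ (rotT_norm hjk) z, rotT_norm hjk, rotT_apply_left hjk]
    have h4 : ((z j + z k) / Real.sqrt 2) ^ 4 = (z j + z k) ^ 4 / 4 := by
      rw [div_pow, show Real.sqrt 2 ^ 4 = 4 by
        rw [show (4:ℕ) = 2 * 2 from rfl, pow_mul, sqrt2_sq]; norm_num]
    rw [h4]; ring
  rw [int_congr key] at h
  have i1 : Integrable (fun z : Vec d => (1/4) * F K e 4 0 j j z) :=
    (integrable_F K hKmeas hKpos hKmom hK0 e 4 0 j j (by omega)).const_mul _
  have i2 : Integrable (F K e 3 1 j k) :=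
    integrable_F K hKmeas hKpos hKmom hK0 e 3 1 j k (by omega)
  have i3 : Integrable (fun z : Vec d => (3/2) * F K e 2 2 j k z) :=
    (integrable_F K hKmeas hKpos hKmom hK0 e 2 2 j k (by omega)).const_mul _
  have i4 : Integrable (F K e 1 3 j k) :=
    integrable_F K hKmeas hKpos hKmom hK0 e 1 3 j k (by omega)
  have i5 : Integrable (fun z : Vec d => (1/4) * F K e 4 0 k k z) :=
    (integrable_F K hKmeas hKpos hKmom hK0 e 4 0 k k (by omega)).const_mul _
  have e1 : (∫ z : Vec d, (1/4 * F K e 4 0 j j z + F K e 3 1 j k z + 3/2 * F K e 2 2 j k z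
        + F K e 1 3 j k z + 1/4 * F K e 4 0 k k z))
      = (∫ z : Vec d, (1/4 * F K e 4 0 j j z + F K e 3 1 j k z + 3/2 * F K e 2 2 j k z
        + F K e 1 3 j k z)) + ∫ z : Vec d, 1/4 * F K e 4 0 k k z :=
    integral_add (((i1.add i2).add i3).add i4) i5
  have e2 : (∫ z : Vec d, (1/4 * F K e 4 0 j j z + F K e 3 1 j k z + 3/2 * F K e 2 2 j k z
        + F K e 1 3 j k z))
      = (∫ z : Vec d, (1/4 * F K e 4 0 j j z + F K e 3 1 j k z + 3/2 * F K e 2 2 j k z))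
        + ∫ z : Vec d, F K e 1 3 j k z := integral_add ((i1.add i2).add i3) i4
  have e3 : (∫ z : Vec d, (1/4 * F K e 4 0 j j z + F K e 3 1 j k z + 3/2 * F K e 2 2 j k z))
      = (∫ z : Vec d, (1/4 * F K e 4 0 j j z + F K e 3 1 j k z))
        + ∫ z : Vec d, 3/2 * F K e 2 2 j k z := integral_add (i1.add i2) i3
  have e4 : (∫ z : Vec d, (1/4 * F K e 4 0 j j z + F K e 3 1 j k z))
      = (∫ z : Vec d, 1/4 * F K e 4 0 j j z) + ∫ z : Vec d, F K e 3 1 j k z :=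
    integral_add i1 i2
  rw [e1, e2, e3, e4, integral_const_mul, integral_const_mul, integral_const_mul,
      vanish K hκ e 3 1 hjk ⟨0, rfl⟩, vanish K hκ e 1 3 hjk ⟨1, rfl⟩,
      swap_single K hκ e 4 k j] at h
  linarith

lemma sum_const_int {g : Fin d → ℝ} (j : Fin d) (h : ∀ i, g i = g j) :
    ∑ i, g i = d * g j := by
  rw [Finset.sum_congr rfl fun i _ => h i, Finset.sum_const, Finset.card_univ, Fintype.card_fin,
    nsmul_eq_mul]

include hKmeas hKpos hKmom hK0 hκ in
lemma moment_expand (e : ℕ) (he : e ≤ 4) (j : Fin d) :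
    (∫ z : Vec d, K z * euclNorm z ^ (e + 2)) = d * ∫ z : Vec d, F K e 2 0 j j z := by
  have h1 : (∫ z : Vec d, K z * euclNorm z ^ (e+2)) = ∑ i, ∫ z : Vec d, F K e 2 0 i i z := by
    rw [← integral_finset_sum _ fun i _ =>
      integrable_F K hKmeas hKpos hKmom hK0 e 2 0 i i (by omega)]
    refine int_congr fun z => ?_
    calc K z * euclNorm z ^ (e + 2)
        = (∑ i, z i ^ 2) * (K z * euclNorm z ^ e) := by
          rw [pow_add, euclNorm_sq]; ring
      _ = ∑ i, z i ^ 2 * (K z * euclNorm z ^ e) := Finset.sum_mul _ _ _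
      _ = ∑ i, F K e 2 0 i i z := Finset.sum_congr rfl fun i _ => by unfold F; ring
  rw [h1]
  exact sum_const_int j fun i => swap_single K hκ e 2 i j

include hKmeas hKpos hKmom hK0 hκ in
lemma split_expand (e : ℕ) (he : e ≤ 2) {j k : Fin d} (hjk : k ≠ j) (hd : 1 ≤ d) :
    (∫ z : Vec d, F K (e+2) 2 0 j j z) =
      (∫ z : Vec d, F K e 4 0 j j z) + ((d:ℝ) - 1) * ∫ z : Vec d, F K e 2 2 k j z := by
  have h1 : (∫ z : Vec d, F K (e+2) 2 0 j j z) = ∑ i, ∫ z : Vec d, F K e 2 2 i j z := by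
    rw [← integral_finset_sum _ fun i _ =>
      integrable_F K hKmeas hKpos hKmom hK0 e 2 2 i j (by omega)]
    refine int_congr fun z => ?_
    calc F K (e+2) 2 0 j j z
        = (∑ i, z i ^ 2) * (K z * (euclNorm z ^ e * z j ^ 2)) := by
          unfold F; rw [pow_add, euclNorm_sq]; ring
      _ = ∑ i, z i ^ 2 * (K z * (euclNorm z ^ e * z j ^ 2)) := Finset.sum_mul _ _ _
      _ = ∑ i, F K e 2 2 i j z := Finset.sum_congr rfl fun i _ => by unfold F; ring
  rw [h1, ← Finset.add_sum_erase _ _ (Finset.mem_univ j)]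
  have h3 : (∫ z : Vec d, F K e 2 2 j j z) = ∫ z : Vec d, F K e 4 0 j j z :=
    int_congr fun z => by unfold F; ring
  have h4 : ∑ i ∈ Finset.univ.erase j, (∫ z : Vec d, F K e 2 2 i j z)
      = ((d:ℝ) - 1) * ∫ z : Vec d, F K e 2 2 k j z := by
    rw [Finset.sum_congr rfl fun i hi =>
      swap_pair K hκ e 2 2 (Finset.ne_of_mem_erase hi) hjk]
    rw [Finset.sum_const, Finset.card_erase_of_mem (Finset.mem_univ j), Finset.card_univ,
      Fintype.card_fin, nsmul_eq_mul, Nat.cast_sub hd, Nat.cast_one]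
  rw [h3, h4]


include hKmeas hKpos hKmom hK0 in
lemma denom_ne (hd : 1 ≤ d) (h2m : (∫ z : Vec d, K z * euclNorm z ^ 2) = d) :
    (∫ z : Vec d, K z * euclNorm z ^ 6)
      - (∫ z : Vec d, K z * euclNorm z ^ 4) ^ 2 / d ≠ 0 := by
  have hd0 : (d:ℝ) ≠ 0 := Nat.cast_ne_zero.2 (by omega)
  set m4 := ∫ z : Vec d, K z * euclNorm z ^ 4 with hm4
  set m6 := ∫ z : Vec d, K z * euclNorm z ^ 6 with hm6
  set c : ℝ := m4 / d with hc
  intro h0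
  have I6 : Integrable (fun z : Vec d => K z * euclNorm z ^ 6) := hKn K hKmom 6 (by norm_num)
  have I4 : Integrable (fun z : Vec d => K z * euclNorm z ^ 4) := hKn K hKmom 4 (by norm_num)
  have I2 : Integrable (fun z : Vec d => K z * euclNorm z ^ 2) := hKn K hKmom 2 (by norm_num)
  have hfeq : (fun z : Vec d => K z * (euclNorm z ^ 2 * (euclNorm z ^ 2 - c) ^ 2))
      = fun z => (K z * euclNorm z ^ 6 - (2*c) * (K z * euclNorm z ^ 4))
          + c^2 * (K z * euclNorm z ^ 2) := funext fun z => by ring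
  have hfi : Integrable (fun z : Vec d => K z * (euclNorm z ^ 2 * (euclNorm z ^ 2 - c) ^ 2)) := by
    rw [hfeq]
    exact (I6.sub (I4.const_mul _)).add (I2.const_mul _)
  have hval : (∫ z : Vec d, K z * (euclNorm z ^ 2 * (euclNorm z ^ 2 - c) ^ 2)) = 0 := by
    have s1 : (∫ z : Vec d, ((K z * euclNorm z ^ 6 - (2*c) * (K z * euclNorm z ^ 4))
          + c^2 * (K z * euclNorm z ^ 2)))
        = (∫ z : Vec d, (K z * euclNorm z ^ 6 - (2*c) * (K z * euclNorm z ^ 4)))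
          + ∫ z : Vec d, c^2 * (K z * euclNorm z ^ 2) :=
      integral_add (I6.sub (I4.const_mul _)) (I2.const_mul _)
    have s2 : (∫ z : Vec d, (K z * euclNorm z ^ 6 - (2*c) * (K z * euclNorm z ^ 4)))
        = (∫ z : Vec d, K z * euclNorm z ^ 6) - ∫ z : Vec d, (2*c) * (K z * euclNorm z ^ 4) :=
      integral_sub I6 (I4.const_mul _)
    rw [hfeq, s1, s2, integral_const_mul, integral_const_mul, h2m, ← hm4, ← hm6, hc]
    field_simp
    field_simp at h0
    linear_combination h0
  have hnn : 0 ≤ fun z : Vec d => K z * (euclNorm z ^ 2 * (euclNorm z ^ 2 - c) ^ 2) :=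
    fun z => mul_nonneg (hKpos z) (mul_nonneg (pow_nonneg (euclNorm_nonneg z) 2) (sq_nonneg _))
  have hae := (integral_eq_zero_iff_of_nonneg hnn hfi).1 hval
  set A : Set (Vec d) := {z | euclNorm z ^ 2 * (euclNorm z ^ 2 - c) ^ 2 = 0} with hA
  have hcont : Continuous fun z : Vec d => euclNorm z ^ 2 * (euclNorm z ^ 2 - c) ^ 2 :=
    (continuous_euclNorm.pow 2).mul
      (((continuous_euclNorm.pow 2).sub continuous_const).pow 2)
  have hAm : MeasurableSet A := hcont.measurable (measurableSet_singleton 0)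
  have hφ := EuclideanSpace.volume_preserving_symm_measurableEquiv_toLp (Fin d)
  haveI : Nontrivial (EuclideanSpace ℝ (Fin d)) := by
    refine ⟨0, EuclideanSpace.single ⟨0, by omega⟩ (1:ℝ), fun h => ?_⟩
    have h0 := congrArg (fun v : EuclideanSpace ℝ (Fin d) => v (⟨0, by omega⟩ : Fin d)) h
    rw [EuclideanSpace.single_apply] at h0
    simp at h0
  have hA0 : volume A = 0 := by
    rw [← hφ.measure_preimage hAm.nullMeasurableSet]
    refine measure_mono_null ?_
      (measure_union_null (Measure.addHaar_sphere volume (0 : EuclideanSpace ℝ (Fin d)) 0)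
        (Measure.addHaar_sphere volume (0 : EuclideanSpace ℝ (Fin d)) (Real.sqrt c)))
    intro x hx
    have hxA : euclNorm ((MeasurableEquiv.toLp 2 (Fin d → ℝ)).symm x) ^ 2
        * (euclNorm ((MeasurableEquiv.toLp 2 (Fin d → ℝ)).symm x) ^ 2 - c) ^ 2 = 0 := hx
    have hnx : euclNorm ((MeasurableEquiv.toLp 2 (Fin d → ℝ)).symm x) = ‖x‖ :=
      (norm_eq_euclNorm x).symm
    rw [hnx] at hxA
    rcases mul_eq_zero.1 hxA with h1 | h1
    · left
      rw [mem_sphere_zero_iff_norm]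
      exact pow_eq_zero_iff (by norm_num) |>.1 h1
    · right
      rw [mem_sphere_zero_iff_norm]
      have : ‖x‖ ^ 2 = c := by
        have := pow_eq_zero_iff (n := 2) (by norm_num) |>.1 h1
        linarith
      rw [← this, Real.sqrt_sq (norm_nonneg x)]
  have hAc : ∀ᵐ z : Vec d, z ∉ A := measure_eq_zero_iff_ae_notMem.1 hA0
  have hKae : ∀ᵐ z : Vec d, K z = 0 := by
    filter_upwards [hae, hAc] with z h1 h2
    have h1' : K z * (euclNorm z ^ 2 * (euclNorm z ^ 2 - c) ^ 2) = 0 := h1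
    rcases mul_eq_zero.1 h1' with h | h
    · exact h
    · exact absurd h h2
  have hz : (∫ z : Vec d, K z) = 0 := integral_eq_zero_of_ae hKae
  rw [hK0] at hz
  exact one_ne_zero hz


end Kernel

end Stmt3

open Stmt3

/-- for a spherically symmetric kernel satisfying (K0)-(K2), the refined
polynomial `p_j(z) = a z_j - b ‖z‖² z_j` satisfies `∫ K p_j z^γ = 1{γ = e_j} · 1`
for all multi-indices `γ` with `|γ| ≤ 3`. -/
theorem statement3 {d : ℕ} (hd : 1 ≤ d)
    (K : Vec d → ℝ) (hKmeas : Measurable K) (hKpos : ∀ z, 0 ≤ K z)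
    (hKbd : ∃ C : ℝ, ∀ z, K z ≤ C)
    (hKmom : ∀ r : ℝ, 0 < r → Integrable (fun z => K z * euclNorm z ^ r))
    (hK0 : (∫ z : Vec d, K z) = 1)
    (hK1 : ∃ κ : ℝ → ℝ, (∀ t, 0 ≤ κ t) ∧ ∀ z : Vec d, K z = κ (euclNorm z))
    (hK2 : ∀ i j : Fin d, (∫ z : Vec d, K z * z i * z j) = if i = j then 1 else 0)
    (m4 m6 a b : ℝ)
    (hm4 : m4 = ∫ z : Vec d, K z * euclNorm z ^ 4)
    (hm6 : m6 = ∫ z : Vec d, K z * euclNorm z ^ 6)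
    (hb : b = m4 / (m6 - m4 ^ 2 / d))
    (ha : a = 1 + b * m4 / d) :
    ∀ j : Fin d, ∀ γ : Fin d → ℕ, (∑ i, γ i) ≤ 3 →
      (∫ z : Vec d, K z * (a * z j - b * euclNorm z ^ 2 * z j) * ∏ i, z i ^ γ i) =
        if γ = Pi.single j 1 then 1 else 0 := by
  obtain ⟨κ, hκpos, hκeq⟩ := hK1
  have hκ : ∀ T : Vec d → Vec d, (∀ z, euclNorm (T z) = euclNorm z) → ∀ z, K (T z) = K z :=
    fun T hT z => by rw [hκeq, hκeq, hT]
  have hd0 : (d:ℝ) ≠ 0 := Nat.cast_ne_zero.2 (by omega)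
  have hdpos : (0:ℝ) < d := by exact_mod_cast Nat.pos_of_ne_zero (by omega)
  set j0 : Fin d := ⟨0, hd⟩ with hj0
  -- second moments
  have h2 : ∀ i : Fin d, (∫ z : Vec d, F K 0 2 0 i i z) = 1 := by
    intro i
    have h := hK2 i i
    rw [if_pos rfl] at h
    rw [← h]
    exact int_congr fun z => by unfold F; ring
  have h2m : (∫ z : Vec d, K z * euclNorm z ^ 2) = d := by
    have := moment_expand K hKmeas hKpos hKmom hK0 hκ 0 (by omega) j0
    norm_num at this
    rw [this, h2 j0, mul_one]
  -- a * m4 = b * m6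
  have amb : a * m4 = b * m6 := by
    have hne := denom_ne K hKmeas hKpos hKmom hK0 hd h2m
    rw [← hm4, ← hm6] at hne
    have hb' : b * (m6 - m4 ^ 2 / (d:ℝ)) = m4 := by
      rw [hb]; exact div_mul_cancel₀ m4 hne
    rw [ha]
    linear_combination (-1 : ℝ) * hb'
  have hm4j : ∀ j : Fin d, m4 = d * ∫ z : Vec d, F K 2 2 0 j j z := by
    intro j
    have := moment_expand K hKmeas hKpos hKmom hK0 hκ 2 (by omega) j
    norm_num at this
    rw [hm4, this]
  have hm6j : ∀ j : Fin d, m6 = d * ∫ z : Vec d, F K 4 2 0 j j z := by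
    intro j
    have := moment_expand K hKmeas hKpos hKmom hK0 hκ 4 (by omega) j
    norm_num at this
    rw [hm6, this]
  -- core identities
  have hcore : ∀ (j k : Fin d), k ≠ j →
      (a * (∫ z : Vec d, F K 0 2 2 j k z) = b * ∫ z : Vec d, F K 2 2 2 j k z) ∧
      (a * (∫ z : Vec d, F K 0 4 0 j j z) = b * ∫ z : Vec d, F K 2 4 0 j j z) := by
    intro j k hkj
    have hjk : j ≠ k := hkj.symm
    have hc0 : (∫ z : Vec d, F K 0 2 2 k j z) = ∫ z : Vec d, F K 0 2 2 j k z :=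
      int_congr fun z => by unfold F; ring
    have hc2 : (∫ z : Vec d, F K 2 2 2 k j z) = ∫ z : Vec d, F K 2 2 2 j k z :=
      int_congr fun z => by unfold F; ring
    have r0 := rot4 K hKmeas hKpos hKmom hK0 hκ 0 (by omega) hjk
    have r2 := rot4 K hKmeas hKpos hKmom hK0 hκ 2 (by omega) hjk
    have s0 := split_expand K hKmeas hKpos hKmom hK0 hκ 0 (by omega) hkj hd
    have s2 := split_expand K hKmeas hKpos hKmom hK0 hκ 2 (by omega) hkj hd
    norm_num at s0 s2
    rw [hc0] at s0
    rw [hc2] at s2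
    set R := ∫ z : Vec d, F K 0 2 2 j k z with hR
    set S := ∫ z : Vec d, F K 2 2 2 j k z with hS
    have hm4R : m4 = (d:ℝ) * ((d:ℝ) + 2) * R := by
      rw [hm4j j, s0, r0]; ring
    have hm6S : m6 = (d:ℝ) * ((d:ℝ) + 2) * S := by
      rw [hm6j j, s2, r2]; ring
    have hfac : (d:ℝ) * ((d:ℝ) + 2) ≠ 0 := by positivity
    have key : a * R = b * S := by
      apply mul_left_cancel₀ hfac
      linear_combination amb - a * hm4R + b * hm6S
    refine ⟨key, ?_⟩
    rw [r0, r2]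
    linear_combination 3 * key
  have hP4 : ∀ j : Fin d, a * (∫ z : Vec d, F K 0 4 0 j j z)
      = b * ∫ z : Vec d, F K 2 4 0 j j z := by
    intro j
    by_cases hd1 : d = 1
    · have hNj : ∀ z : Vec d, euclNorm z ^ 2 = z j ^ 2 := by
        intro z
        rw [euclNorm_sq]
        have hall : ∀ i : Fin d, i = j := fun i => Fin.ext (by omega)
        have hsumc : ∑ i, z i ^ 2 = (Finset.univ : Finset (Fin d)).card • (z j ^ 2) := by
          rw [← Finset.sum_const]
          exact Finset.sum_congr rfl fun i _ => by rw [hall i]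
        rw [hsumc, Finset.card_univ, Fintype.card_fin, hd1, one_smul]
      have e4 : (∫ z : Vec d, F K 0 4 0 j j z) = m4 := by
        rw [hm4]
        refine int_congr fun z => ?_
        unfold F
        rw [show euclNorm z ^ 4 = (euclNorm z ^ 2) ^ 2 by ring, hNj z]; ring
      have e6 : (∫ z : Vec d, F K 2 4 0 j j z) = m6 := by
        rw [hm6]
        refine int_congr fun z => ?_
        unfold F
        rw [show euclNorm z ^ 6 = euclNorm z ^ 2 * (euclNorm z ^ 2) ^ 2 by ring, hNj z]; ring
      rw [e4, e6]; exact amb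
    · have hd2 : 2 ≤ d := by omega
      set k : Fin d := if j.val = 0 then ⟨1, by omega⟩ else ⟨0, by omega⟩ with hk
      have hkj : k ≠ j := by
        rw [hk]
        by_cases h : j.val = 0 <;> simp [h, Fin.ext_iff] <;> omega
      exact (hcore j k hkj).2
  -- main casework
  intro j γ hγ
  set δ : Fin d → ℕ := fun i => γ i + (if i = j then 1 else 0) with hδ
  have hδsum : ∑ i, δ i = (∑ i, γ i) + 1 := by
    rw [hδ, Finset.sum_add_distrib]
    congr 1
    simp
  have hprod : ∀ z : Vec d, z j * ∏ i, z i ^ γ i = ∏ i, z i ^ δ i := by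
    intro z
    have h1 : ∏ i, z i ^ δ i = (∏ i, z i ^ γ i) * ∏ i, (if i = j then z i else 1) := by
      rw [← Finset.prod_mul_distrib]
      refine Finset.prod_congr rfl fun i _ => ?_
      by_cases h : i = j <;> simp [hδ, h, pow_add]
    rw [h1, Finset.prod_ite_eq' Finset.univ j fun i => z i, if_pos (Finset.mem_univ j)]
    ring
  by_cases hodd : ∃ i, Odd (δ i)
  · obtain ⟨i, hoi⟩ := hodd
    have hne : γ ≠ Pi.single j 1 := by
      intro h
      apply (Nat.not_odd_iff_even.2 ?_) hoi
      rw [hδ]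
      by_cases hij : i = j
      · subst hij
        simp [h, Pi.single_eq_same]
      · simp [h, Pi.single_eq_of_ne hij, hij]
    rw [if_neg hne]
    have hflip := integral_comp_flip i
      (fun z : Vec d => K z * (a * z j - b * euclNorm z ^ 2 * z j) * ∏ l, z l ^ γ l)
    have hflipprod : ∀ z : Vec d, (∏ l, flipT i z l ^ δ l) = - ∏ l, z l ^ δ l := by
      intro z
      rw [← Finset.mul_prod_erase _ (fun l => flipT i z l ^ δ l) (Finset.mem_univ i),
        ← Finset.mul_prod_erase _ (fun l => z l ^ δ l) (Finset.mem_univ i)]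
      rw [Finset.prod_congr rfl fun l hl =>
        by rw [flipT_apply_other (Finset.mem_erase.1 hl).1 z]]
      rw [flipT_apply_self, Odd.neg_pow hoi]
      ring
    have hptw : ∀ z : Vec d,
        (fun z : Vec d => K z * (a * z j - b * euclNorm z ^ 2 * z j) * ∏ l, z l ^ γ l)
          (flipT i z)
        = - (K z * (a * z j - b * euclNorm z ^ 2 * z j) * ∏ l, z l ^ γ l) := by
      intro z
      simp only
      rw [hκ (flipT i) (flipT_norm i) z, flipT_norm]
      calc K z * (a * flipT i z j - b * euclNorm z ^ 2 * flipT i z j) * ∏ l, flipT i z l ^ γ l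
          = K z * ((a - b * euclNorm z ^ 2) * (flipT i z j * ∏ l, flipT i z l ^ γ l)) := by
            ring
        _ = K z * ((a - b * euclNorm z ^ 2) * ∏ l, flipT i z l ^ δ l) := by
            rw [hprod (flipT i z)]
        _ = K z * ((a - b * euclNorm z ^ 2) * -(∏ l, z l ^ δ l)) := by rw [hflipprod z]
        _ = K z * ((a - b * euclNorm z ^ 2) * -(z j * ∏ l, z l ^ γ l)) := by rw [hprod z]
        _ = - (K z * (a * z j - b * euclNorm z ^ 2 * z j) * ∏ l, z l ^ γ l) := by ring
    rw [int_congr hptw, integral_neg] at hflip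
    linarith
  · push_neg at hodd
    have heven : ∀ i, Even (δ i) := fun i => Nat.not_odd_iff_even.1 (hodd i)
    have hsum4 : ∑ i, δ i ≤ 4 := by rw [hδsum]; omega
    have hδj1 : 1 ≤ δ j := by simp [hδ]
    have hδjle : δ j ≤ 4 :=
      le_trans (Finset.single_le_sum (fun i _ => Nat.zero_le _) (Finset.mem_univ j)) hsum4
    have hpair : ∀ i : Fin d, i ≠ j → δ i + δ j ≤ 4 := by
      intro i hij
      calc δ i + δ j = ∑ l ∈ ({i, j} : Finset (Fin d)), δ l := (Finset.sum_pair hij).symm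
        _ ≤ ∑ l, δ l := Finset.sum_le_sum_of_subset (Finset.subset_univ _)
        _ ≤ 4 := hsum4
    have hδj24 : δ j = 2 ∨ δ j = 4 := by
      obtain ⟨m, hm⟩ := heven j
      omega
    rcases hδj24 with hδj | hδj
    · -- δ j = 2, γ j = 1
      have hγj : γ j = 1 := by
        have : δ j = γ j + 1 := by simp [hδ]
        omega
      by_cases hex : ∃ k, k ≠ j ∧ δ k ≠ 0
      · obtain ⟨k, hkj, hk0⟩ := hex
        have hδk : δ k = 2 := by
          obtain ⟨m, hm⟩ := heven k
          have := hpair k hkj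
          omega
        have hγk : γ k = 2 := by
          have : δ k = γ k := by simp [hδ, hkj]
          omega
        have hz : ∀ l, l ≠ j → l ≠ k → γ l = 0 := by
          intro l hlj hlk
          have hsub : ({l, j, k} : Finset (Fin d)) ⊆ Finset.univ := Finset.subset_univ _
          have h3 : δ l + (δ j + δ k) ≤ 4 := by
            calc δ l + (δ j + δ k) = ∑ x ∈ ({l, j, k} : Finset (Fin d)), δ x := by
                  rw [Finset.sum_insert (by simp [hlj, hlk]), Finset.sum_pair hkj.symm]
              _ ≤ ∑ x, δ x := Finset.sum_le_sum_of_subset hsub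
              _ ≤ 4 := hsum4
          have hδl : δ l = γ l := by simp [hδ, hlj]
          omega
        have hne : γ ≠ Pi.single j 1 := by
          intro h
          have := congrFun h k
          rw [Pi.single_eq_of_ne hkj] at this
          omega
        rw [if_neg hne]
        have hmono : ∀ z : Vec d, (∏ l, z l ^ γ l) = z j * z k ^ 2 := by
          intro z
          have h1 : ∏ l ∈ ({j, k} : Finset (Fin d)), z l ^ γ l = ∏ l, z l ^ γ l :=
            Finset.prod_subset (Finset.subset_univ _) fun x _ hx => by
              rw [hz x (fun h => hx (by simp [h])) (fun h => hx (by simp [h])), pow_zero]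
          rw [← h1, Finset.prod_pair hkj.symm, hγj, hγk, pow_one]
        have hpt : ∀ z : Vec d, K z * (a * z j - b * euclNorm z ^ 2 * z j) * ∏ l, z l ^ γ l
            = a * F K 0 2 2 j k z - b * F K 2 2 2 j k z := by
          intro z
          rw [hmono z]; unfold F; ring
        rw [int_congr hpt]
        have I1 : Integrable (fun z : Vec d => a * F K 0 2 2 j k z) :=
          (integrable_F K hKmeas hKpos hKmom hK0 0 2 2 j k (by omega)).const_mul a
        have I2 : Integrable (fun z : Vec d => b * F K 2 2 2 j k z) :=
          (integrable_F K hKmeas hKpos hKmom hK0 2 2 2 j k (by omega)).const_mul b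
        have hsub : (∫ z : Vec d, (a * F K 0 2 2 j k z - b * F K 2 2 2 j k z))
            = (∫ z : Vec d, a * F K 0 2 2 j k z) - ∫ z : Vec d, b * F K 2 2 2 j k z :=
          integral_sub I1 I2
        rw [hsub, integral_const_mul, integral_const_mul, (hcore j k hkj).1, sub_self]
      · push_neg at hex
        have hγ1 : γ = Pi.single j 1 := by
          funext i
          by_cases h : i = j
          · subst h; rw [Pi.single_eq_same]; exact hγj
          · rw [Pi.single_eq_of_ne h]
            have : δ i = γ i := by simp [hδ, h]
            have := hex i h
            omega
        rw [if_pos hγ1]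
        have hmono : ∀ z : Vec d, (∏ l, z l ^ γ l) = z j := by
          intro z
          have h1 : ∏ l ∈ ({j} : Finset (Fin d)), z l ^ γ l = ∏ l, z l ^ γ l :=
            Finset.prod_subset (Finset.subset_univ _) fun x _ hx => by
              have hxj : x ≠ j := fun h => hx (by simp [h])
              have : δ x = γ x := by simp [hδ, hxj]
              rw [show γ x = 0 by have := hex x hxj; omega, pow_zero]
          rw [← h1, Finset.prod_singleton, hγj, pow_one]
        have hpt : ∀ z : Vec d, K z * (a * z j - b * euclNorm z ^ 2 * z j) * ∏ l, z l ^ γ l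
            = a * F K 0 2 0 j j z - b * F K 2 2 0 j j z := by
          intro z
          rw [hmono z]; unfold F; ring
        rw [int_congr hpt]
        have I1 : Integrable (fun z : Vec d => a * F K 0 2 0 j j z) :=
          (integrable_F K hKmeas hKpos hKmom hK0 0 2 0 j j (by omega)).const_mul a
        have I2 : Integrable (fun z : Vec d => b * F K 2 2 0 j j z) :=
          (integrable_F K hKmeas hKpos hKmom hK0 2 2 0 j j (by omega)).const_mul b
        have hsub : (∫ z : Vec d, (a * F K 0 2 0 j j z - b * F K 2 2 0 j j z))
            = (∫ z : Vec d, a * F K 0 2 0 j j z) - ∫ z : Vec d, b * F K 2 2 0 j j z :=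
          integral_sub I1 I2
        rw [hsub, integral_const_mul, integral_const_mul, h2 j, mul_one]
        have hQ : (∫ z : Vec d, F K 2 2 0 j j z) = m4 / d := by
          rw [hm4j j]; field_simp
        rw [hQ, ha]
        field_simp
        ring
    · -- δ j = 4, γ j = 3
      have hγj : γ j = 3 := by
        have : δ j = γ j + 1 := by simp [hδ]
        omega
      have hz : ∀ i, i ≠ j → γ i = 0 := by
        intro i hij
        have := hpair i hij
        have : δ i = γ i := by simp [hδ, hij]
        have := hpair i hij
        omega
      have hne : γ ≠ Pi.single j 1 := by
        intro h
        have := congrFun h j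
        rw [Pi.single_eq_same] at this
        omega
      rw [if_neg hne]
      have hmono : ∀ z : Vec d, (∏ l, z l ^ γ l) = z j ^ 3 := by
        intro z
        have h1 : ∏ l ∈ ({j} : Finset (Fin d)), z l ^ γ l = ∏ l, z l ^ γ l :=
          Finset.prod_subset (Finset.subset_univ _) fun x _ hx => by
            rw [hz x (fun h => hx (by simp [h])), pow_zero]
        rw [← h1, Finset.prod_singleton, hγj]
      have hpt : ∀ z : Vec d, K z * (a * z j - b * euclNorm z ^ 2 * z j) * ∏ l, z l ^ γ l
          = a * F K 0 4 0 j j z - b * F K 2 4 0 j j z := by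
        intro z
        rw [hmono z]; unfold F; ring
      rw [int_congr hpt]
      have I1 : Integrable (fun z : Vec d => a * F K 0 4 0 j j z) :=
        (integrable_F K hKmeas hKpos hKmom hK0 0 4 0 j j (by omega)).const_mul a
      have I2 : Integrable (fun z : Vec d => b * F K 2 4 0 j j z) :=
        (integrable_F K hKmeas hKpos hKmom hK0 2 4 0 j j (by omega)).const_mul b
      have hsub : (∫ z : Vec d, (a * F K 0 4 0 j j z - b * F K 2 4 0 j j z))
          = (∫ z : Vec d, a * F K 0 4 0 j j z) - ∫ z : Vec d, b * F K 2 4 0 j j z :=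
        integral_sub I1 I2
      rw [hsub, integral_const_mul, integral_const_mul, hP4 j, sub_self]
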